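/- arXiv:1309.0152 — 2 statements merged into one kernel-verified Lean document; each statement's English description precedes it below -/
import Mathlib

section
/- The space ℓ_∞(F̂) = { x : ℕ → ℝ | sup_n |(f_n/f_{n+1}) x_n − (f_{n+1}/f_n) x_{n-1}| < ∞ } (with the convention that the n = 0 term is |x_0|) is a Banach space under the norm ‖x‖ = sup_n |(F̂x)_n|, isometrically isomorphic to ℓ_∞ via x ↦ F̂x. -/
open scoped BigOperators ENNReal
open Filter Topology

noncomputable def fibr (n : ℕ) : ℝ := (Nat.fib (n + 1) : ℝ)

lemma fibr_pos (n : ℕ) : 0 < fibr n := by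
  simpa [fibr] using Nat.cast_pos.mpr (Nat.fib_pos.mpr (Nat.succ_pos n))

noncomputable def Fhat (x : ℕ → ℝ) : ℕ → ℝ
  | 0 => x 0
  | (n + 1) => fibr (n + 1) / fibr (n + 2) * x (n + 1) - fibr (n + 2) / fibr (n + 1) * x n

lemma Fhat_add (x y : ℕ → ℝ) : Fhat (x + y) = Fhat x + Fhat y := by
  funext n; cases n <;> simp [Fhat] <;> ring

lemma Fhat_smul (c : ℝ) (x : ℕ → ℝ) : Fhat (c • x) = c • Fhat x := by
  funext n; cases n <;> simp [Fhat] <;> ring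

noncomputable def FhatL : (ℕ → ℝ) →ₗ[ℝ] (ℕ → ℝ) where
  toFun := Fhat
  map_add' := Fhat_add
  map_smul' := Fhat_smul

lemma Fhat_inj : Function.Injective Fhat := by
  have h0 : ∀ x : ℕ → ℝ, Fhat x = 0 → x = 0 := by
    intro x hx
    funext n
    induction n with
    | zero => simpa [Fhat] using congrFun hx 0
    | succ n ih =>
        have h := congrFun hx (n + 1)
        simp only [Fhat, ih, Pi.zero_apply, mul_zero, sub_zero] at h
        have h1 : fibr (n + 1) / fibr (n + 2) ≠ 0 :=
          div_ne_zero (fibr_pos _).ne' (fibr_pos _).ne'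
        simpa [Pi.zero_apply] using (mul_eq_zero.mp h).resolve_left h1
  have : Function.Injective FhatL := (injective_iff_map_eq_zero' FhatL).mpr
    (fun x => ⟨fun h => h0 x h, fun h => by simp [FhatL, h]; funext n; cases n <;> simp [Fhat]⟩)
  exact this

noncomputable def FhatLP : PreLp (fun _ : ℕ => ℝ) →ₗ[ℝ] PreLp (fun _ : ℕ => ℝ) where
  toFun x := Fhat x
  map_add' x y := Fhat_add x y
  map_smul' c x := Fhat_smul c x

noncomputable def ellF (p : ℝ≥0∞) : Submodule ℝ (PreLp (fun _ : ℕ => ℝ)) :=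
  (lpSubmodule ℝ (fun _ : ℕ => ℝ) p).comap FhatLP

instance (p : ℝ≥0∞) : CoeOut (ellF p) (ℕ → ℝ) := ⟨fun x => (x : PreLp (fun _ : ℕ => ℝ))⟩

noncomputable def ellFtoLp (p : ℝ≥0∞) : ellF p →ₗ[ℝ] lp (fun _ : ℕ => ℝ) p where
  toFun x := ⟨Fhat (x : ℕ → ℝ), x.2⟩
  map_add' x y := Subtype.ext (Fhat_add (x : ℕ → ℝ) (y : ℕ → ℝ))
  map_smul' c x := Subtype.ext (Fhat_smul c (x : ℕ → ℝ))

lemma ellFtoLp_inj (p : ℝ≥0∞) : Function.Injective (ellFtoLp p) := by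
  intro x y h
  have h2 : Fhat (x : ℕ → ℝ) = Fhat (y : ℕ → ℝ) := congrArg Subtype.val h
  exact Subtype.ext (Fhat_inj h2)

noncomputable instance (p : ℝ≥0∞) [Fact (1 ≤ p)] : NormedAddCommGroup (ellF p) :=
  NormedAddCommGroup.induced _ _ (ellFtoLp p) (ellFtoLp_inj p)

noncomputable instance (p : ℝ≥0∞) [Fact (1 ≤ p)] : NormedSpace ℝ (ellF p) :=
  NormedSpace.induced _ _ _ (ellFtoLp p)

noncomputable def abar (a : ℕ → ℝ) (k : ℕ) : ℝ :=
  ∑' j : ℕ, (fibr (k + j + 1)) ^ 2 / (fibr k * fibr (k + 1)) * a (k + j)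

noncomputable def hmnc {X : Type*} [MetricSpace X] (Q : Set X) : ℝ :=
  sInf {ε : ℝ | 0 < ε ∧ ∃ s : Finset X, Q ⊆ ⋃ x ∈ s, Metric.ball x ε}



instance factTop : Fact ((1 : ℝ≥0∞) ≤ ∞) := ⟨le_top⟩

noncomputable def Fhatinv (y : ℕ → ℝ) : ℕ → ℝ
  | 0 => y 0
  | (n + 1) => fibr (n + 2) / fibr (n + 1) *
      (y (n + 1) + fibr (n + 2) / fibr (n + 1) * Fhatinv y n)

lemma Fhat_Fhatinv (y : ℕ → ℝ) : Fhat (Fhatinv y) = y := by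
  funext n
  cases n with
  | zero => simp [Fhat, Fhatinv]
  | succ n =>
      have h1 := (fibr_pos (n + 1)).ne'
      have h2 := (fibr_pos (n + 2)).ne'
      simp only [Fhat, Fhatinv]
      field_simp
      ring

lemma Fhat_surj : Function.Surjective Fhat := fun y => ⟨Fhatinv y, Fhat_Fhatinv y⟩

lemma ellFtoLp_surj : Function.Surjective (ellFtoLp ∞) := by
  intro y
  have hx : Fhat (Fhatinv (y : ℕ → ℝ)) = (y : ℕ → ℝ) := Fhat_Fhatinv _
  have hmem : (Fhatinv (y : ℕ → ℝ) : PreLp (fun _ : ℕ => ℝ)) ∈ ellF ∞ := by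
    show FhatLP _ ∈ lpSubmodule ℝ (fun _ : ℕ => ℝ) ∞
    have : FhatLP (Fhatinv (y : ℕ → ℝ)) = (y : ℕ → ℝ) := hx
    rw [this]
    exact y.2
  refine ⟨⟨Fhatinv (y : ℕ → ℝ), hmem⟩, ?_⟩
  exact Subtype.ext hx

theorem stmt4 :
    ∃ e : ellF ∞ ≃ₗ[ℝ] lp (fun _ : ℕ => ℝ) ∞,
      (∀ x : ellF ∞, ((e x : ∀ _ : ℕ, ℝ)) = Fhat (x : ℕ → ℝ)) ∧
      (∀ x : ellF ∞, ‖x‖ = ‖e x‖) ∧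
      (∀ x : ellF ∞, ‖x‖ = ⨆ n : ℕ, |Fhat (x : ℕ → ℝ) n|) ∧
      CompleteSpace (ellF ∞) := by
  have hbij : Function.Bijective (ellFtoLp ∞) := ⟨ellFtoLp_inj ∞, ellFtoLp_surj⟩
  let e : ellF ∞ ≃ₗ[ℝ] lp (fun _ : ℕ => ℝ) ∞ := LinearEquiv.ofBijective (ellFtoLp ∞) hbij
  have he : ∀ x : ellF ∞, ((e x : ∀ _ : ℕ, ℝ)) = Fhat (x : ℕ → ℝ) := fun x => rfl
  have hnorm : ∀ x : ellF ∞, ‖x‖ = ‖e x‖ := fun x => rfl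
  refine ⟨e, he, hnorm, ?_, ?_⟩
  · intro x
    rw [hnorm x, lp.norm_eq_ciSup]
    simp [he x, Real.norm_eq_abs]
  · let iso : ellF ∞ ≃ₗᵢ[ℝ] lp (fun _ : ℕ => ℝ) ∞ := ⟨e, fun x => rfl⟩
    exact iso.toIsometryEquiv.completeSpace
end

section
/- Let A be an infinite matrix inducing a bounded operator L_A : ℓ_∞(F̂) → c_0, with associated matrix ā_{nk} = Σ_{j=k}^∞ (f_{j+1}^2/(f_k f_{k+1})) a_{nj}, and assume each ā_n ∈ ℓ_1. Then the Hausdorff measure of noncompactness of L_A equals limsup_n Σ_k |ā_{nk}|, and L_A is compact if and only if lim_n Σ_k |ā_{nk}| = 0. -/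
open scoped BigOperators ENNReal
open Filter Topology

section FibFacts

lemma fibr_one_le (n : ℕ) : 1 ≤ fibr n := by
  have := Nat.fib_pos.mpr (Nat.succ_pos n)
  simpa [fibr] using (Nat.one_le_cast (α := ℝ)).mpr this

lemma fibr_mono {m n : ℕ} (h : m ≤ n) : fibr m ≤ fibr n := by
  simpa [fibr] using (Nat.cast_le (α := ℝ)).mpr (Nat.fib_mono (Nat.succ_le_succ h))

lemma fibr_succ (n : ℕ) : fibr (n + 2) = fibr (n + 1) + fibr n := by
  simp only [fibr]
  rw [show n + 2 + 1 = (n + 1) + 2 from rfl, Nat.fib_add_two]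
  push_cast
  ring

lemma two_pow_le_fibr_mul (k : ℕ) : (2:ℝ)^k ≤ fibr k * fibr (k + 1) := by
  induction k with
  | zero => norm_num [fibr]
  | succ k ih =>
      have h1 : fibr k ≤ fibr (k+1) := fibr_mono (Nat.le_succ k)
      have h2 : fibr (k+2) = fibr (k+1) + fibr k := fibr_succ k
      have hpos := fibr_pos k
      have hpos1 := fibr_pos (k+1)
      have : (2:ℝ) * (fibr k * fibr (k+1)) ≤ fibr (k+1) * fibr (k+2) := by
        rw [h2]; nlinarith
      calc (2:ℝ)^(k+1) = 2 * 2^k := by ring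
        _ ≤ 2 * (fibr k * fibr (k+1)) := by linarith [ih]
        _ ≤ fibr (k+1) * fibr (k+2) := this

lemma summable_inv_fibr : Summable (fun k : ℕ => 1 / (fibr k * fibr (k + 1))) := by
  have hg : Summable (fun k : ℕ => (1/2:ℝ)^k) :=
    summable_geometric_of_lt_one (by norm_num) (by norm_num)
  refine Summable.of_nonneg_of_le
    (fun k => by have h1 := fibr_pos k; have h2 := fibr_pos (k+1); positivity)
    (fun k => ?_) hg
  rw [div_pow, one_pow]
  exact one_div_le_one_div_of_le (by positivity) (two_pow_le_fibr_mul k)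

end FibFacts

/-- inverse formula: every `x` is recovered from `y = Fhat x`. -/
lemma x_eq_of_Fhat (x : ℕ → ℝ) (k : ℕ) :
    x k = fibr (k+1)^2 * ∑ j ∈ Finset.range (k+1), Fhat x j / (fibr j * fibr (j+1)) := by
  induction k with
  | zero => simp [Fhat, fibr]
  | succ k ih =>
      rw [Finset.sum_range_succ, mul_add]
      have h1 : fibr (k+1) ≠ 0 := (fibr_pos _).ne'
      have h2 : fibr (k+2) ≠ 0 := (fibr_pos _).ne'
      rw [show Fhat x (k+1) = fibr (k+1) / fibr (k+2) * x (k+1) - fibr (k+2) / fibr (k+1) * x k from rfl]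
      rw [ih]
      set S := ∑ j ∈ Finset.range (k+1), Fhat x j / (fibr j * fibr (j+1)) with hS
      field_simp
      ring

/-- surjectivity construction. -/
noncomputable def invF (y : ℕ → ℝ) (k : ℕ) : ℝ :=
  fibr (k+1)^2 * ∑ j ∈ Finset.range (k+1), y j / (fibr j * fibr (j+1))

lemma Fhat_invF (y : ℕ → ℝ) : Fhat (invF y) = y := by
  funext k
  cases k with
  | zero => simp [Fhat, invF, fibr]
  | succ k =>
      have h1 : fibr (k+1) ≠ 0 := (fibr_pos _).ne'
      have h2 : fibr (k+2) ≠ 0 := (fibr_pos _).ne'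
      show fibr (k+1) / fibr (k+2) * invF y (k+1) - fibr (k+2) / fibr (k+1) * invF y k = y (k+1)
      unfold invF
      rw [Finset.sum_range_succ (n := k+1)]
      field_simp
      ring
lemma fibr_zero : fibr 0 = 1 := by norm_num [fibr]
lemma fibr_one : fibr 1 = 1 := by norm_num [fibr]

lemma rep_eq (a x : ℕ → ℝ) {C : ℝ}
    (ha : ∀ k : ℕ, Summable fun j : ℕ => |fibr (k + j + 1) ^ 2 / (fibr k * fibr (k + 1)) * a (k + j)|)
    (hy : ∀ k, |Fhat x k| ≤ C) :
    ∑' j, a j * x j = ∑' k, abar a k * Fhat x k := by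
  set y : ℕ → ℝ := Fhat x with hydef
  have hC0 : 0 ≤ C := le_trans (abs_nonneg _) (hy 0)
  -- the coefficient function
  set c : ℕ → ℕ → ℝ := fun k j => fibr (k + j + 1) ^ 2 / (fibr k * fibr (k + 1)) * a (k + j)
    with hc
  have hfd : ∀ k : ℕ, (0:ℝ) < fibr k * fibr (k + 1) :=
    fun k => mul_pos (fibr_pos k) (fibr_pos (k+1))
  have habs : ∀ k j, |c k j| = fibr (k + j + 1) ^ 2 / (fibr k * fibr (k + 1)) * |a (k + j)| := by
    intro k j
    rw [hc, abs_mul, abs_div, abs_of_nonneg (sq_nonneg _), abs_of_pos (hfd k)]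
  -- summability of the weighted row
  have hT : Summable (fun j : ℕ => fibr (j+1)^2 * |a j|) := by
    refine (ha 0).congr fun j => ?_
    simp only [zero_add, fibr_zero, fibr_one, mul_one, div_one]
    rw [abs_mul, abs_of_nonneg (sq_nonneg (fibr (j+1)))]
  set T : ℝ := ∑' j, fibr (j+1)^2 * |a j| with hTdef
  -- tail bound
  have htail : ∀ k : ℕ, ∑' j, |c k j| ≤ 1 / (fibr k * fibr (k + 1)) * T := by
    intro k
    have hshift : Summable (fun j : ℕ => fibr (k + j + 1)^2 * |a (k + j)|) := by
      have := (summable_nat_add_iff (f := fun j => fibr (j+1)^2 * |a j|) k).mpr hT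
      refine this.congr fun j => ?_
      simp [add_comm j k]
    have h1 : ∑' j, |c k j| = 1 / (fibr k * fibr (k + 1)) *
        ∑' j, fibr (k + j + 1)^2 * |a (k + j)| := by
      rw [← tsum_mul_left]
      refine tsum_congr fun j => ?_
      rw [habs]
      field_simp
    rw [h1]
    refine mul_le_mul_of_nonneg_left ?_ (by have := hfd k; positivity)
    -- shifted sum ≤ T
    have h2 : ∑' j, fibr (k + j + 1)^2 * |a (k + j)| = ∑' j, fibr ((j + k) + 1)^2 * |a (j + k)| := by
      refine tsum_congr fun j => by rw [add_comm k j]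
    rw [h2]
    have h3 := Summable.sum_add_tsum_nat_add (f := fun j => fibr (j+1)^2 * |a j|) k hT
    have h4 : (0:ℝ) ≤ ∑ i ∈ Finset.range k, fibr (i+1)^2 * |a i| :=
      Finset.sum_nonneg fun i _ => by positivity
    linarith [h3.ge, h3.le]
  -- the double-indexed family
  set G : ℕ × ℕ → ℝ := fun p => c p.1 p.2 * y p.1 with hG
  have hGfiber : ∀ k : ℕ, Summable fun j => |G (k, j)| := by
    intro k
    refine ((ha k).mul_right |y k|).congr fun j => ?_
    rw [hG]; exact (abs_mul _ _).symm
  have hGabs : Summable fun p : ℕ × ℕ => |G p| := by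
    rw [summable_prod_of_nonneg (fun p => abs_nonneg _)]
    refine ⟨hGfiber, ?_⟩
    refine Summable.of_nonneg_of_le (fun k => tsum_nonneg fun j => abs_nonneg _)
      (fun k => ?_) ((summable_inv_fibr.mul_right (T * C)))
    have h5 : ∑' j, |G (k, j)| = (∑' j, |c k j|) * |y k| := by
      rw [← tsum_mul_right]
      exact tsum_congr fun j => by rw [hG, abs_mul]
    rw [h5]
    have h6 : (∑' j, |c k j|) * |y k| ≤ (1 / (fibr k * fibr (k+1)) * T) * C := by
      refine mul_le_mul (htail k) (hy k) (abs_nonneg _) ?_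
      have h7 : (0:ℝ) ≤ T := tsum_nonneg fun j => by positivity
      have := hfd k
      positivity
    calc (∑' j, |c k j|) * |y k| ≤ 1 / (fibr k * fibr (k+1)) * T * C := h6
      _ = 1 / (fibr k * fibr (k+1)) * (T * C) := by ring
  have hGsum : Summable G := summable_abs_iff.mp hGabs
  -- first evaluation : ∑' G = ∑' k, abar a k * y k
  have hEval1 : ∑' p, G p = ∑' k, abar a k * y k := by
    rw [Summable.tsum_prod' hGsum (fun k => summable_abs_iff.mp (hGfiber k))]
    refine tsum_congr fun k => ?_
    have : ∑' j, G (k, j) = (∑' j, c k j) * y k := by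
      rw [← tsum_mul_right]
    rw [this]
    rfl
  -- second evaluation via reindexing
  set H : ℕ × ℕ → ℝ := fun q =>
    if q.2 ≤ q.1 then fibr (q.1 + 1)^2 / (fibr q.2 * fibr (q.2 + 1)) * a q.1 * y q.2 else 0
    with hH
  have he : Function.Injective (fun p : ℕ × ℕ => (p.1 + p.2, p.1)) := by
    intro p q h
    have h1 : p.1 + p.2 = q.1 + q.2 := congrArg Prod.fst h
    have h2 : p.1 = q.1 := congrArg Prod.snd h
    have h3 : p.2 = q.2 := by omega
    exact Prod.ext h2 h3
  have hcomp : ∀ p : ℕ × ℕ, H (p.1 + p.2, p.1) = G p := by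
    intro p
    have : p.1 ≤ p.1 + p.2 := Nat.le_add_right _ _
    simp only [hH, hG, if_pos this, hc]
    try ring_nf
  have hvanish : ∀ q : ℕ × ℕ, q ∉ Set.range (fun p : ℕ × ℕ => (p.1 + p.2, p.1)) → H q = 0 := by
    intro q hq
    by_contra h
    have h2 : q.2 ≤ q.1 := by
      by_contra hle; exact h (by simp [hH, hle])
    refine hq ⟨(q.2, q.1 - q.2), ?_⟩
    have h4 : q.2 + (q.1 - q.2) = q.1 := by omega
    exact Prod.ext h4 rfl
  have hHsum : Summable H := by
    rw [← Function.Injective.summable_iff he hvanish]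
    exact hGsum.congr fun p => (hcomp p).symm
  have hEval2 : ∑' q, H q = ∑' p, G p := by
    rw [← Function.Injective.tsum_eq he (f := H) (Function.support_subset_iff'.mpr hvanish)]
    exact tsum_congr fun p => hcomp p
  -- third evaluation : ∑' H = ∑' n, a n * x n
  have hHfiber : ∀ n : ℕ, ∀ k ∉ Finset.range (n+1), H (n, k) = 0 := by
    intro n k hk
    simp only [Finset.mem_range] at hk
    have : ¬ (k ≤ n) := by omega
    simp [hH, this]
  have hEval3 : ∑' q, H q = ∑' n, a n * x n := by
    rw [Summable.tsum_prod' hHsum (fun n => summable_of_ne_finset_zero (hHfiber n))]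
    refine tsum_congr fun n => ?_
    rw [tsum_eq_sum (hHfiber n)]
    have hx := x_eq_of_Fhat x n
    have : ∑ k ∈ Finset.range (n+1), H (n, k)
        = a n * (fibr (n+1)^2 * ∑ k ∈ Finset.range (n+1), y k / (fibr k * fibr (k+1))) := by
      rw [Finset.mul_sum, Finset.mul_sum]
      refine Finset.sum_congr rfl fun k hk => ?_
      simp only [Finset.mem_range] at hk
      have hkn : k ≤ n := by omega
      simp only [hH, if_pos hkn]
      field_simp
      try ring
    rw [this, ← hx]
    try ring
  rw [← hEval3, hEval2, hEval1]
lemma schur (b : ℕ → ℕ → ℝ) (hb : ∀ n, Summable fun k => |b n k|)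
    (hweak : ∀ y : ℕ → ℝ, (∀ k, |y k| ≤ 1) →
      Tendsto (fun n => ∑' k, b n k * y k) atTop (𝓝 0)) :
    Tendsto (fun n => ∑' k, |b n k|) atTop (𝓝 0) := by
  set S : ℕ → ℝ := fun n => ∑' k, |b n k| with hS
  have hS0 : ∀ n, 0 ≤ S n := fun n => tsum_nonneg fun k => abs_nonneg _
  by_contra hcon
  rw [Metric.tendsto_atTop] at hcon
  push_neg at hcon
  obtain ⟨ε, hε, hfreq⟩ := hcon
  have hfreq' : ∀ N : ℕ, ∃ n, N ≤ n ∧ ε ≤ S n := by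
    intro N
    obtain ⟨n, hn1, hn2⟩ := hfreq N
    refine ⟨n, hn1, ?_⟩
    rwa [Real.dist_eq, sub_zero, abs_of_nonneg (hS0 n)] at hn2
  have hε5 : 0 < ε / 5 := by linarith
  -- coordinatewise convergence
  have hcoord : ∀ k, Tendsto (fun n => b n k) atTop (𝓝 0) := by
    intro k
    have h1 := hweak (fun j => if j = k then 1 else 0)
      (fun j => by by_cases h : j = k <;> simp [h])
    have h2 : ∀ n, ∑' j, b n j * (if j = k then 1 else 0) = b n k := by
      intro n
      rw [tsum_eq_single k (fun j hj => by simp [hj])]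
      simp
    exact h1.congr h2
  -- head sums tend to zero
  have hhead : ∀ m : ℕ, Tendsto (fun n => ∑ k ∈ Finset.range m, |b n k|) atTop (𝓝 0) := by
    intro m
    have := tendsto_finset_sum (Finset.range m)
      (fun k _ => ((hcoord k).abs : Tendsto (fun n => |b n k|) atTop (𝓝 |0|)))
    simpa using this
  -- combined step existence
  have hpair : ∀ N m : ℕ, ∃ q : ℕ × ℕ,
      (N ≤ q.1 ∧ ε ≤ S q.1 ∧ ∑ k ∈ Finset.range m, |b q.1 k| < ε / 5) ∧
      (m < q.2 ∧ ∑' k, |b q.1 (k + q.2)| < ε / 5) := by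
    intro N m
    have hev : ∀ᶠ n in atTop, ∑ k ∈ Finset.range m, |b n k| < ε / 5 := by
      have := (hhead m).eventually (eventually_lt_nhds hε5)
      simpa using this
    obtain ⟨N', hN'⟩ := hev.exists_forall_of_atTop
    obtain ⟨n, hn1, hn2⟩ := hfreq' (max N N')
    have hhd : ∑ k ∈ Finset.range m, |b n k| < ε / 5 := hN' n (le_trans (le_max_right _ _) hn1)
    -- choose the tail cutoff
    have htails : Tendsto (fun M => ∑ k ∈ Finset.range M, |b n k|) atTop (𝓝 (S n)) :=
      (hb n).hasSum.tendsto_sum_nat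
    have hev2 : ∀ᶠ M in atTop, S n - ε / 5 < ∑ k ∈ Finset.range M, |b n k| := by
      have := htails.eventually (eventually_gt_nhds (by linarith : S n - ε/5 < S n))
      simpa using this
    obtain ⟨M₀, hM₀⟩ := hev2.exists_forall_of_atTop
    refine ⟨(n, max M₀ (m + 1)), ⟨le_trans (le_max_left _ _) hn1, hn2, hhd⟩, ?_, ?_⟩
    · exact lt_of_lt_of_le (Nat.lt_succ_self m) (le_max_right _ _)
    · have hM := hM₀ (max M₀ (m+1)) (le_max_left _ _)
      have hsplit := Summable.sum_add_tsum_nat_add (f := fun k => |b n k|) (max M₀ (m+1)) (hb n)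
      have : ∑' k, |b n (k + max M₀ (m+1))| = S n - ∑ k ∈ Finset.range (max M₀ (m+1)), |b n k| := by
        linarith [hsplit]
      rw [this]; linarith
  -- recursive construction
  set g : ℕ → ℕ × ℕ := fun i => Nat.rec (Classical.choose (hpair 0 0))
    (fun _ p => Classical.choose (hpair (p.1 + 1) p.2)) i with hg
  have hg0 := Classical.choose_spec (hpair 0 0)
  have hgs : ∀ i : ℕ,
      (((g i).1 + 1 ≤ (g (i+1)).1) ∧ ε ≤ S (g (i+1)).1 ∧
        ∑ k ∈ Finset.range (g i).2, |b (g (i+1)).1 k| < ε / 5) ∧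
      ((g i).2 < (g (i+1)).2 ∧ ∑' k, |b (g (i+1)).1 (k + (g (i+1)).2)| < ε / 5) := by
    intro i
    exact Classical.choose_spec (hpair ((g i).1 + 1) (g i).2)
  set nn : ℕ → ℕ := fun i => (g i).1 with hnn
  set mm : ℕ → ℕ := fun i => Nat.rec 0 (fun i' _ => (g i').2) i with hmm
  have hmm0 : mm 0 = 0 := rfl
  have hmmsucc : ∀ i, mm (i + 1) = (g i).2 := fun i => rfl
  have hmmlt : ∀ i, mm i < mm (i + 1) := by
    intro i
    cases i with
    | zero => exact hg0.2.1
    | succ i => exact (hgs i).2.1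
  have hmmStrict : StrictMono mm := strictMono_nat_of_lt_succ hmmlt
  have hnnStrict : StrictMono nn := strictMono_nat_of_lt_succ
    (fun i => lt_of_lt_of_le (Nat.lt_succ_self _) (hgs i).1.1)
  have hSnn : ∀ i, ε ≤ S (nn i) := by
    intro i
    cases i with
    | zero => exact hg0.1.2.1
    | succ i => exact (hgs i).1.2.1
  have hheadnn : ∀ i, ∑ k ∈ Finset.range (mm i), |b (nn i) k| < ε / 5 := by
    intro i
    cases i with
    | zero =>
        show ∑ k ∈ Finset.range 0, |b (nn 0) k| < ε / 5
        simpa using hε5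
    | succ i => exact (hgs i).1.2.2
  have htailnn : ∀ i, ∑' k, |b (nn i) (k + mm (i + 1))| < ε / 5 := by
    intro i
    cases i with
    | zero => exact hg0.2.2
    | succ i => exact (hgs i).2.2
  have hmmge : ∀ i, i ≤ mm i := by
    intro i
    induction i with
    | zero => exact Nat.zero_le _
    | succ i ih => exact Nat.succ_le_of_lt (lt_of_le_of_lt ih (hmmlt i))
  -- the block index of a coordinate
  classical
  set blk : ℕ → ℕ := fun k => Nat.findGreatest (fun i => mm i ≤ k) (k + 1) with hblk
  have hblk_le : ∀ k, mm (blk k) ≤ k := by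
    intro k
    exact Nat.findGreatest_spec (P := fun i => mm i ≤ k) (Nat.zero_le _) (Nat.zero_le k)
  have hblk_lt : ∀ k, k < mm (blk k + 1) := by
    intro k
    by_contra h
    push_neg at h
    by_cases hle : blk k + 1 ≤ k + 1
    · exact absurd h
        (Nat.findGreatest_is_greatest (P := fun i => mm i ≤ k) (Nat.lt_succ_self _) hle)
    · push_neg at hle
      have h5 : k + 1 ≤ blk k + 1 := le_of_lt hle
      have h6 : blk k + 1 ≤ mm (blk k + 1) := hmmge _
      omega
  have hblk_eq : ∀ i k, mm i ≤ k → k < mm (i + 1) → blk k = i := by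
    intro i k h1 h2
    rcases lt_trichotomy (blk k) i with h | h | h
    · have h4 : blk k + 1 ≤ i := h
      have h5 : mm (blk k + 1) ≤ mm i := hmmStrict.monotone h4
      have h6 := hblk_lt k
      omega
    · exact h
    · have h4 : i + 1 ≤ blk k := h
      have h5 : mm (i + 1) ≤ mm (blk k) := hmmStrict.monotone h4
      have h6 := hblk_le k
      omega
  clear hg0 hgs hg
  clear_value g
  -- the sign sequence
  set y : ℕ → ℝ := fun k => if 0 ≤ b (nn (blk k)) k then 1 else -1 with hy
  have hy1 : ∀ k, |y k| ≤ 1 := by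
    intro k
    by_cases h : 0 ≤ b (nn (blk k)) k <;> simp [hy, h]
  have hsgn : ∀ k, b (nn (blk k)) k * y k = |b (nn (blk k)) k| := by
    intro k
    by_cases h : 0 ≤ b (nn (blk k)) k
    · rw [hy]; simp only [if_pos h, mul_one, abs_of_nonneg h]
    · push_neg at h
      rw [hy]; simp only [if_neg (not_le.mpr h), mul_neg_one, abs_of_neg h]
  clear hblk_le hblk_lt hmmge hmm0 hmmsucc hy hblk hmm hnn
  clear_value y blk nn mm
  -- the key lower bound
  have hkey : ∀ i, ε / 5 ≤ ∑' k, b (nn i) k * y k := by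
    intro i
    set n : ℕ := nn i
    have hsumy : Summable fun k => b n k * y k := by
      have habs : Summable fun k => |b n k * y k| := by
        refine Summable.of_nonneg_of_le (fun k => abs_nonneg _) (fun k => ?_) (hb n)
        rw [abs_mul]
        calc |b n k| * |y k| ≤ |b n k| * 1 :=
              mul_le_mul_of_nonneg_left (hy1 k) (abs_nonneg _)
          _ = |b n k| := mul_one _
      exact summable_abs_iff.mp habs
    have hsplit := Summable.sum_add_tsum_nat_add (f := fun k => b n k * y k) (mm (i+1)) hsumy
    -- tail bound
    have hshift : Summable fun k => |b n (k + mm (i+1))| :=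
      (summable_nat_add_iff (f := fun t => |b n t|) (mm (i+1))).mpr (hb n)
    have htail1 : |∑' k, b n (k + mm (i+1)) * y (k + mm (i+1))| ≤
        ∑' k, |b n (k + mm (i+1))| := by
      have h1 : ∀ k, |b n (k + mm (i+1)) * y (k + mm (i+1))| ≤ |b n (k + mm (i+1))| := by
        intro k
        rw [abs_mul]
        calc |b n (k + mm (i+1))| * |y (k + mm (i+1))| ≤ |b n (k + mm (i+1))| * 1 :=
              mul_le_mul_of_nonneg_left (hy1 _) (abs_nonneg _)
          _ = _ := mul_one _
      have h2abs : Summable fun k => |b n (k + mm (i+1)) * y (k + mm (i+1))| :=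
        Summable.of_nonneg_of_le (fun k => abs_nonneg _) h1 hshift
      have h3 := norm_tsum_le_tsum_norm
        (f := fun k => b n (k + mm (i+1)) * y (k + mm (i+1)))
        (by simpa only [Real.norm_eq_abs] using h2abs)
      simp only [Real.norm_eq_abs] at h3
      exact le_trans h3 (Summable.tsum_le_tsum h1 h2abs hshift)
    have htail2 : ∑' k, |b n (k + mm (i+1))| < ε / 5 := htailnn i
    -- finite part split
    have hle1 : mm i ≤ mm (i+1) := le_of_lt (hmmlt i)
    have hfin : ∑ k ∈ Finset.range (mm (i+1)), b n k * y k
        = ∑ k ∈ Finset.Ico 0 (mm i), b n k * y k + ∑ k ∈ Finset.Ico (mm i) (mm (i+1)), b n k * y k := by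
      rw [Finset.sum_Ico_consecutive _ (Nat.zero_le _) hle1, Finset.range_eq_Ico]
    have hblock : ∑ k ∈ Finset.Ico (mm i) (mm (i+1)), b n k * y k
        = ∑ k ∈ Finset.Ico (mm i) (mm (i+1)), |b n k| := by
      refine Finset.sum_congr rfl fun k hk => ?_
      rw [Finset.mem_Ico] at hk
      have : blk k = i := hblk_eq i k hk.1 hk.2
      have := hsgn k
      rw [this] at *
      simpa [hblk_eq i k hk.1 hk.2] using hsgn k
    -- block mass is large
    have hmass : ∑ k ∈ Finset.Ico (mm i) (mm (i+1)), |b n k| ≥ S n - 2 * (ε / 5) := by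
      have h1 : ∑ k ∈ Finset.Ico 0 (mm (i+1)), |b n k| ≥ S n - ε / 5 := by
        have hsplit2 := Summable.sum_add_tsum_nat_add (f := fun k => |b n k|) (mm (i+1)) (hb n)
        rw [← Finset.range_eq_Ico]
        have := htailnn i
        linarith
      have h2 : ∑ k ∈ Finset.Ico 0 (mm i), |b n k| < ε / 5 := by
        rw [← Finset.range_eq_Ico]; exact hheadnn i
      have h3 : ∑ k ∈ Finset.Ico 0 (mm i), |b n k| + ∑ k ∈ Finset.Ico (mm i) (mm (i+1)), |b n k|
          = ∑ k ∈ Finset.Ico 0 (mm (i+1)), |b n k| :=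
        Finset.sum_Ico_consecutive _ (Nat.zero_le _) hle1
      linarith
    have hhd : |∑ k ∈ Finset.Ico 0 (mm i), b n k * y k| ≤ ε / 5 := by
      calc |∑ k ∈ Finset.Ico 0 (mm i), b n k * y k| ≤ ∑ k ∈ Finset.Ico 0 (mm i), |b n k * y k| :=
            Finset.abs_sum_le_sum_abs _ _
        _ ≤ ∑ k ∈ Finset.Ico 0 (mm i), |b n k| := by
            refine Finset.sum_le_sum fun k _ => ?_
            rw [abs_mul]
            exact le_trans (mul_le_mul_of_nonneg_left (hy1 k) (abs_nonneg _)) (le_of_eq (mul_one _))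
        _ ≤ ε / 5 := by
            rw [← Finset.range_eq_Ico]
            exact le_of_lt (hheadnn i)
    have hεS : ε ≤ S n := hSnn i
    have habs_tail : -(ε/5) ≤ ∑' k, b n (k + mm (i+1)) * y (k + mm (i+1)) := by
      have := abs_le.mp (le_of_lt (lt_of_le_of_lt htail1 htail2))
      linarith [this.1]
    have habs_head : -(ε/5) ≤ ∑ k ∈ Finset.Ico 0 (mm i), b n k * y k := by
      have := abs_le.mp hhd
      linarith [this.1]
    have : ∑' k, b n k * y k
        = ∑ k ∈ Finset.Ico 0 (mm i), b n k * y k + ∑ k ∈ Finset.Ico (mm i) (mm (i+1)), |b n k|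
          + ∑' k, b n (k + mm (i+1)) * y (k + mm (i+1)) := by
      rw [← hblock, ← hfin]
      linarith [hsplit]
    rw [this]
    linarith
  -- contradiction with weak convergence
  have hlim : Tendsto (fun i => ∑' k, b (nn i) k * y k) atTop (𝓝 0) :=
    (hweak y hy1).comp hnnStrict.tendsto_atTop
  have hev := hlim.eventually (eventually_lt_nhds hε5)
  obtain ⟨i, hi⟩ := hev.exists
  exact absurd (hkey i) (not_le.mpr hi)
lemma ellF_norm (x : ellF ∞) : ‖x‖ = ‖ellFtoLp ∞ x‖ := rfl

lemma ellF_coord_le (x : ellF ∞) (k : ℕ) : |Fhat (x : ℕ → ℝ) k| ≤ ‖x‖ := by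
  have h := lp.norm_apply_le_norm (E := fun _ : ℕ => ℝ) (p := ∞)
    (by simp : (∞ : ℝ≥0∞) ≠ 0) (ellFtoLp ∞ x) k
  rw [Real.norm_eq_abs] at h
  exact h

lemma mem_ellF_of_memℓp (z : ℕ → ℝ) (h : Memℓp (Fhat z) ∞) : z ∈ ellF ∞ := by
  show FhatLP z ∈ lpSubmodule ℝ (fun _ : ℕ => ℝ) ∞
  show Memℓp (FhatLP z) ∞
  exact h

noncomputable def mkEll (y : ℕ → ℝ) (h : Memℓp y ∞) : ellF ∞ :=
  ⟨invF y, mem_ellF_of_memℓp (invF y) (by rw [Fhat_invF]; exact h)⟩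

lemma mkEll_Fhat (y : ℕ → ℝ) (h : Memℓp y ∞) : Fhat ((mkEll y h : ellF ∞) : ℕ → ℝ) = y :=
  Fhat_invF y
section Main

variable (A : ℕ → ℕ → ℝ)

lemma Lcoord
    (ha : ∀ n k : ℕ, Summable fun j : ℕ => |fibr (k + j + 1) ^ 2 / (fibr k * fibr (k + 1)) * A n (k + j)|)
    (L : ellF ∞ →L[ℝ] lp (fun _ : ℕ => ℝ) ∞)
    (hrep : ∀ x : ellF ∞, ∀ n : ℕ, (L x : ℕ → ℝ) n = ∑' k : ℕ, A n k * (x : ℕ → ℝ) k)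
    (x : ellF ∞) (n : ℕ) :
    (L x : ℕ → ℝ) n = ∑' k : ℕ, abar (A n) k * Fhat (x : ℕ → ℝ) k := by
  rw [hrep x n]
  exact rep_eq (A n) (x : ℕ → ℝ) (ha n) (fun k => ellF_coord_le x k)

lemma row_tendsto
    (ha : ∀ n k : ℕ, Summable fun j : ℕ => |fibr (k + j + 1) ^ 2 / (fibr k * fibr (k + 1)) * A n (k + j)|)
    (hrow : ∀ n : ℕ, Summable fun k : ℕ => |abar (A n) k|)
    (L : ellF ∞ →L[ℝ] lp (fun _ : ℕ => ℝ) ∞)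
    (hrep : ∀ x : ellF ∞, ∀ n : ℕ, (L x : ℕ → ℝ) n = ∑' k : ℕ, A n k * (x : ℕ → ℝ) k)
    (hc0 : ∀ x : ellF ∞, Tendsto (fun n : ℕ => (L x : ℕ → ℝ) n) atTop (𝓝 0)) :
    Tendsto (fun n : ℕ => ∑' k : ℕ, |abar (A n) k|) atTop (𝓝 0) := by
  apply schur (fun n k => abar (A n) k) hrow
  intro y hy1
  have hmem : Memℓp y ∞ := by
    apply memℓp_infty
    refine ⟨1, ?_⟩
    rintro r ⟨k, rfl⟩
    simpa [Real.norm_eq_abs] using hy1 k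
  set xel : ellF ∞ := mkEll y hmem with hxel
  have hF : Fhat (xel : ℕ → ℝ) = y := mkEll_Fhat y hmem
  have h1 := hc0 xel
  refine h1.congr fun n => ?_
  rw [Lcoord A ha L hrep xel n, hF]

lemma Lcoord_bound
    (ha : ∀ n k : ℕ, Summable fun j : ℕ => |fibr (k + j + 1) ^ 2 / (fibr k * fibr (k + 1)) * A n (k + j)|)
    (hrow : ∀ n : ℕ, Summable fun k : ℕ => |abar (A n) k|)
    (L : ellF ∞ →L[ℝ] lp (fun _ : ℕ => ℝ) ∞)
    (hrep : ∀ x : ellF ∞, ∀ n : ℕ, (L x : ℕ → ℝ) n = ∑' k : ℕ, A n k * (x : ℕ → ℝ) k)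
    (x : ellF ∞) (n : ℕ) :
    |(L x : ℕ → ℝ) n| ≤ (∑' k : ℕ, |abar (A n) k|) * ‖x‖ := by
  rw [Lcoord A ha L hrep x n]
  have hnx : 0 ≤ ‖x‖ := norm_nonneg _
  have hle : ∀ k, |abar (A n) k * Fhat (x : ℕ → ℝ) k| ≤ |abar (A n) k| * ‖x‖ := by
    intro k
    rw [abs_mul]
    exact mul_le_mul_of_nonneg_left (ellF_coord_le x k) (abs_nonneg _)
  have habs : Summable fun k => |abar (A n) k * Fhat (x : ℕ → ℝ) k| :=
    Summable.of_nonneg_of_le (fun k => abs_nonneg _) hle ((hrow n).mul_right ‖x‖)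
  have h3 := norm_tsum_le_tsum_norm
    (f := fun k => abar (A n) k * Fhat (x : ℕ → ℝ) k)
    (by simpa only [Real.norm_eq_abs] using habs)
  simp only [Real.norm_eq_abs] at h3
  refine le_trans h3 ?_
  rw [← tsum_mul_right]
  exact Summable.tsum_le_tsum hle habs ((hrow n).mul_right ‖x‖)

end Main
section TB

/-- truncation linear map into `lp ∞`. -/
noncomputable def trunc (r : ℕ) : (Fin r → ℝ) →ₗ[ℝ] lp (fun _ : ℕ => ℝ) ∞ where
  toFun c := ⟨fun n => if h : n < r then c ⟨n, h⟩ else 0, by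
    apply memℓp_infty
    refine ⟨‖c‖, ?_⟩
    rintro t ⟨n, rfl⟩
    by_cases h : n < r
    · simp only [dif_pos h]
      exact norm_le_pi_norm c ⟨n, h⟩
    · simp only [dif_neg h, norm_zero]
      exact norm_nonneg c⟩
  map_add' c c' := by
    apply Subtype.ext
    funext n
    show (if h : n < r then (c + c') ⟨n, h⟩ else 0)
        = (if h : n < r then c ⟨n, h⟩ else 0) + (if h : n < r then c' ⟨n, h⟩ else 0)
    by_cases h : n < r <;> simp [h]
  map_smul' a c := by
    apply Subtype.ext
    funext n
    show (if h : n < r then (a • c) ⟨n, h⟩ else 0)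
        = a • (if h : n < r then c ⟨n, h⟩ else 0)
    by_cases h : n < r <;> simp [h]

lemma trunc_apply (r : ℕ) (c : Fin r → ℝ) (n : ℕ) :
    (trunc r c : ℕ → ℝ) n = if h : n < r then c ⟨n, h⟩ else 0 := rfl

lemma totallyBounded_image
    (A : ℕ → ℕ → ℝ)
    (ha : ∀ n k : ℕ, Summable fun j : ℕ => |fibr (k + j + 1) ^ 2 / (fibr k * fibr (k + 1)) * A n (k + j)|)
    (hrow : ∀ n : ℕ, Summable fun k : ℕ => |abar (A n) k|)
    (L : ellF ∞ →L[ℝ] lp (fun _ : ℕ => ℝ) ∞)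
    (hrep : ∀ x : ellF ∞, ∀ n : ℕ, (L x : ℕ → ℝ) n = ∑' k : ℕ, A n k * (x : ℕ → ℝ) k)
    (hrows0 : Tendsto (fun n : ℕ => ∑' k : ℕ, |abar (A n) k|) atTop (𝓝 0))
    (s : Set (ellF ∞)) (hs : Bornology.IsBounded s) :
    TotallyBounded (⇑L '' s) := by
  rw [Metric.totallyBounded_iff]
  intro ε hε
  obtain ⟨C₀, hC₀⟩ := (isBounded_iff_forall_norm_le).mp hs
  set C : ℝ := max C₀ 0 with hC
  have hC1 : ∀ x ∈ s, ‖x‖ ≤ C := fun x hx => le_trans (hC₀ x hx) (le_max_left _ _)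
  have hCpos : 0 ≤ C := le_max_right _ _
  have hδ : 0 < ε / 3 / (C + 1) := by positivity
  -- choose the cutoff r
  have hev : ∀ᶠ n in atTop, (∑' k : ℕ, |abar (A n) k|) < ε / 3 / (C + 1) := by
    have := hrows0.eventually (eventually_lt_nhds hδ)
    simpa using this
  obtain ⟨r, hr⟩ := hev.exists_forall_of_atTop
  -- the compact set of truncations
  set D : ℝ := ‖L‖ * C with hD
  have hDpos : 0 ≤ D := mul_nonneg (norm_nonneg _) hCpos
  have hK : IsCompact (trunc r '' Metric.closedBall 0 D) :=
    (isCompact_closedBall _ _).image (trunc r).continuous_of_finiteDimensional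
  obtain ⟨t, htfin, htcov⟩ := (Metric.totallyBounded_iff.mp hK.totallyBounded) (ε / 3)
    (by positivity)
  refine ⟨t, htfin, ?_⟩
  rintro u ⟨x, hxs, rfl⟩
  -- the truncation of L x
  set c₀ : Fin r → ℝ := fun i => (L x : ℕ → ℝ) i with hc₀
  have hxC : ‖x‖ ≤ C := hC1 x hxs
  have hcoordD : ∀ i : Fin r, ‖c₀ i‖ ≤ D := by
    intro i
    have h1 : ‖(L x : ℕ → ℝ) (i : ℕ)‖ ≤ ‖L x‖ :=
      lp.norm_apply_le_norm (by simp : (∞ : ℝ≥0∞) ≠ 0) (L x) (i : ℕ)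
    have h2 : ‖L x‖ ≤ ‖L‖ * ‖x‖ := L.le_opNorm x
    have h3 : ‖L‖ * ‖x‖ ≤ ‖L‖ * C := mul_le_mul_of_nonneg_left hxC (norm_nonneg _)
    calc ‖c₀ i‖ = ‖(L x : ℕ → ℝ) (i : ℕ)‖ := rfl
      _ ≤ ‖L‖ * C := le_trans h1 (le_trans h2 h3)
  have hc₀mem : c₀ ∈ Metric.closedBall (0 : Fin r → ℝ) D := by
    rw [Metric.mem_closedBall, dist_zero_right]
    exact pi_norm_le_iff_of_nonneg hDpos |>.mpr hcoordD
  have htr : trunc r c₀ ∈ trunc r '' Metric.closedBall 0 D := ⟨c₀, hc₀mem, rfl⟩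
  obtain ⟨z, hzt, hz⟩ := Set.mem_iUnion₂.mp (htcov htr)
  refine Set.mem_iUnion₂.mpr ⟨z, hzt, ?_⟩
  -- distance from L x to its truncation
  have hdiff : ‖L x - trunc r c₀‖ ≤ ε / 3 := by
    apply lp.norm_le_of_forall_le (by positivity)
    intro n
    rw [lp.coeFn_sub, Pi.sub_apply]
    by_cases h : n < r
    · rw [trunc_apply, dif_pos h]
      have hcc : c₀ ⟨n, h⟩ = (L x : ℕ → ℝ) n := rfl
      rw [hcc, sub_self, norm_zero]
      positivity
    · rw [trunc_apply, dif_neg h]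
      rw [sub_zero, Real.norm_eq_abs]
      have hb := Lcoord_bound A ha hrow L hrep x n
      have hrn : (∑' k : ℕ, |abar (A n) k|) < ε / 3 / (C + 1) := hr n (by omega)
      have hnn : (0:ℝ) ≤ ∑' k : ℕ, |abar (A n) k| := tsum_nonneg fun k => abs_nonneg _
      calc |(L x : ℕ → ℝ) n| ≤ (∑' k : ℕ, |abar (A n) k|) * ‖x‖ := hb
        _ ≤ (ε / 3 / (C + 1)) * C := by
            apply mul_le_mul (le_of_lt hrn) hxC (norm_nonneg _) (le_of_lt hδ)
        _ ≤ ε / 3 := by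
            rw [div_mul_eq_mul_div]
            rw [div_le_iff₀ (by positivity : (0:ℝ) < C + 1)]
            nlinarith
  have hzd : dist (trunc r c₀) z < ε / 3 := Metric.mem_ball.mp hz
  rw [Metric.mem_ball]
  calc dist (L x) z ≤ dist (L x) (trunc r c₀) + dist (trunc r c₀) z := dist_triangle _ _ _
    _ ≤ ε / 3 + ε / 3 := by
        rw [dist_eq_norm]
        exact add_le_add hdiff (le_of_lt hzd)
    _ < ε := by linarith

end TB

theorem stmt12 (A : ℕ → ℕ → ℝ)
    (ha : ∀ n k : ℕ, Summable fun j : ℕ => |fibr (k + j + 1) ^ 2 / (fibr k * fibr (k + 1)) * A n (k + j)|)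
    (hrow : ∀ n : ℕ, Summable fun k : ℕ => |abar (A n) k|)
    (L : ellF ∞ →L[ℝ] lp (fun _ : ℕ => ℝ) ∞)
    (hrep : ∀ x : ellF ∞, ∀ n : ℕ, (L x : ℕ → ℝ) n = ∑' k : ℕ, A n k * (x : ℕ → ℝ) k)
    (hc0 : ∀ x : ellF ∞, Tendsto (fun n : ℕ => (L x : ℕ → ℝ) n) atTop (𝓝 0)) :
    hmnc (⇑L '' Metric.sphere 0 1) = Filter.limsup (fun n : ℕ => ∑' k : ℕ, |abar (A n) k|) atTop ∧
    ((∀ s : Set (ellF ∞), Bornology.IsBounded s → TotallyBounded (⇑L '' s)) ↔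
      Tendsto (fun n : ℕ => ∑' k : ℕ, |abar (A n) k|) atTop (𝓝 0)) := by
  have hrows0 : Tendsto (fun n : ℕ => ∑' k : ℕ, |abar (A n) k|) atTop (𝓝 0) :=
    row_tendsto A ha hrow L hrep hc0
  have htb : ∀ s : Set (ellF ∞), Bornology.IsBounded s → TotallyBounded (⇑L '' s) :=
    fun s hs => totallyBounded_image A ha hrow L hrep hrows0 s hs
  constructor
  · have hlimsup : Filter.limsup (fun n : ℕ => ∑' k : ℕ, |abar (A n) k|) atTop = 0 :=
      hrows0.limsup_eq
    rw [hlimsup]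
    show sInf {ε : ℝ | 0 < ε ∧ ∃ t : Finset (lp (fun _ : ℕ => ℝ) ∞),
      ⇑L '' Metric.sphere 0 1 ⊆ ⋃ z ∈ t, Metric.ball z ε} = 0
    have hset : {ε : ℝ | 0 < ε ∧ ∃ t : Finset (lp (fun _ : ℕ => ℝ) ∞),
        ⇑L '' Metric.sphere 0 1 ⊆ ⋃ z ∈ t, Metric.ball z ε} = Set.Ioi 0 := by
      ext ε
      constructor
      · rintro ⟨h1, -⟩; exact h1
      · intro hε
        refine ⟨hε, ?_⟩
        have hsb : Bornology.IsBounded (Metric.sphere (0 : ellF ∞) 1) :=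
          Metric.isBounded_sphere
        obtain ⟨t, htfin, htcov⟩ := Metric.totallyBounded_iff.mp (htb _ hsb) ε hε
        refine ⟨htfin.toFinset, ?_⟩
        intro u hu
        have := htcov hu
        rw [Set.mem_iUnion₂] at this ⊢
        obtain ⟨z, hz1, hz2⟩ := this
        exact ⟨z, htfin.mem_toFinset.mpr hz1, hz2⟩
    rw [hset]
    exact csInf_Ioi
  · exact iff_of_true htb hrows0
end
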